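/- Let a < b be reals and g : [a,b] → ℝ be bounded, differentiable, with g' strictly convex. Let λ ∈ (a,b) and σ² with 0 < σ² ≤ (b−λ)(λ−a). Then there exist Borel probability measures μ₋ and μ₊ supported in [a,b] with mean λ and variance σ² such that E_{μ₋}[g(X)] = (σ²·g(a) + (λ−a)²·g(λ + σ²/(λ−a))) / (σ² + (λ−a)²) and E_{μ₊}[g(X)] = (σ²·g(b) + (λ−b)²·g(λ + σ²/(λ−b))) / (σ² + (λ−b)²), and for every Borel probability measure μ supported in [a,b] with mean λ and variance σ² one has E_{μ₋}[g(X)] ≤ E_μ[g(X)] ≤ E_{μ₊}[g(X)]. -/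

import Mathlib

open MeasureTheory Set Filter Topology
open scoped BigOperators ENNReal

noncomputable section

/-- The support of a measure: points all of whose open neighborhoods have
positive measure. -/
def msupport {E : Type*} [TopologicalSpace E] [MeasurableSpace E]
    (μ : Measure E) : Set E :=
  {x | ∀ U : Set E, IsOpen U → x ∈ U → μ U ≠ 0}

lemma my_integrable_dirac {f : ℝ → ℝ} (hf : Measurable f) (u : ℝ) :
    Integrable f (Measure.dirac u) := by
  refine ⟨hf.aestronglyMeasurable, ?_⟩
  simp [HasFiniteIntegral, MeasureTheory.lintegral_dirac]

lemma msupport_null {μ : Measure ℝ} {a b : ℝ} (h : msupport μ ⊆ Icc a b) :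
    μ (Icc a b)ᶜ = 0 := by
  have hx : ∀ x : ((Icc a b)ᶜ : Set ℝ), ∃ V : Set ℝ, IsOpen V ∧ (x : ℝ) ∈ V ∧ μ V = 0 := by
    rintro ⟨x, hx⟩
    by_contra hc
    push_neg at hc
    exact hx (h fun U hU hxU => hc U hU hxU)
  choose V hVo hVx hV0 using hx
  have hcov : (Icc a b)ᶜ ⊆ ⋃ x, V x := fun y hy =>
    mem_iUnion.2 ⟨⟨y, hy⟩, hVx ⟨y, hy⟩⟩
  obtain ⟨T, hTc, hTU⟩ := TopologicalSpace.isOpen_iUnion_countable V hVo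
  have : μ (⋃ x, V x) = 0 := by
    rw [← hTU]
    exact (measure_biUnion_null_iff hTc).2 fun i _ => hV0 i
  exact measure_mono_null hcov this

lemma two_point
    (u v p q : ℝ) (hp : 0 ≤ p) (hq : 0 ≤ q) (hpq : p + q = 1)
    {a b : ℝ} (hu : u ∈ Icc a b) (hv : v ∈ Icc a b) :
    ∃ μ : Measure ℝ, IsProbabilityMeasure μ ∧ msupport μ ⊆ Icc a b ∧
      ∀ f : ℝ → ℝ, Measurable f →
        Integrable f μ ∧ (∫ x, f x ∂μ) = p * f u + q * f v := by
  set μ : Measure ℝ := ENNReal.ofReal p • Measure.dirac u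
      + ENNReal.ofReal q • Measure.dirac v with hμ
  have hprob : IsProbabilityMeasure μ := by
    constructor
    simp [hμ, ← ENNReal.ofReal_add hp hq, hpq]
  refine ⟨μ, hprob, ?_, ?_⟩
  · intro x hx
    by_contra hxI
    refine hx (Icc a b)ᶜ (isOpen_compl_iff.2 isClosed_Icc) hxI ?_
    have h1 : Measure.dirac u (Icc a b)ᶜ = 0 := by
      simp [Measure.dirac_apply' _ (measurableSet_Icc.compl), hu]
    have h2 : Measure.dirac v (Icc a b)ᶜ = 0 := by
      simp [Measure.dirac_apply' _ (measurableSet_Icc.compl), hv]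
    simp [hμ, h1, h2]
  · intro f hf
    have hIu := my_integrable_dirac hf u
    have hIv := my_integrable_dirac hf v
    have hint : Integrable f μ := by
      rw [hμ]
      exact Integrable.add_measure (hIu.smul_measure ENNReal.ofReal_ne_top)
        (hIv.smul_measure ENNReal.ofReal_ne_top)
    refine ⟨hint, ?_⟩
    rw [hμ, integral_add_measure (hIu.smul_measure ENNReal.ofReal_ne_top)
        (hIv.smul_measure ENNReal.ofReal_ne_top),
      integral_smul_measure, integral_smul_measure, integral_dirac, integral_dirac,
      ENNReal.toReal_ofReal hp, ENNReal.toReal_ofReal hq]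
    simp [smul_eq_mul]

set_option maxHeartbeats 1000000 in
lemma tangent_lower (a b c : ℝ) (hab : a < b) (hac : a < c) (hcb : c ≤ b)
    (g g' : ℝ → ℝ)
    (hdiff : ∀ x ∈ Icc a b, HasDerivWithinAt g (g' x) (Icc a b) x)
    (hconv : StrictConvexOn ℝ (Icc a b) g') :
    ∃ α β γ : ℝ, (α + β * a + γ * a ^ 2 = g a) ∧ (α + β * c + γ * c ^ 2 = g c) ∧
      ∀ x ∈ Icc a b, α + β * x + γ * x ^ 2 ≤ g x := by
  have hca : c - a ≠ 0 := sub_ne_zero.2 hac.ne'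
  set m : ℝ := (g c - g a) / (c - a) with hm
  set K : ℝ := (g' c - m) / (c - a) with hK
  set α : ℝ := g a - m * a + K * a * c with hα
  set β : ℝ := m - K * (a + c) with hβ
  refine ⟨α, β, K, ?_, ?_, ?_⟩
  · rw [hα, hβ]; ring
  · rw [hα, hβ]
    have : m * (c - a) = g c - g a := by rw [hm]; field_simp
    nlinarith [this]
  · -- main inequality
    set P : ℝ → ℝ := fun x => α + β * x + K * x ^ 2 with hP
    set φ : ℝ → ℝ := fun x => g x - P x with hφ
    set φ' : ℝ → ℝ := fun x => g' x - (β + 2 * K * x) with hφ'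
    have hφa : φ a = 0 := by simp only [hφ, hP, hα, hβ]; ring
    have hφc : φ c = 0 := by
      have : m * (c - a) = g c - g a := by rw [hm]; field_simp
      simp only [hφ, hP, hα, hβ]; nlinarith [this]
    have hφ'c : φ' c = 0 := by
      have : K * (c - a) = g' c - m := by rw [hK]; field_simp
      simp only [hφ']; nlinarith [this]
    have hPderiv : ∀ x : ℝ, HasDerivAt P (β + 2 * K * x) x := by
      intro x
      have h : HasDerivAt (fun y => (α + β * y) + K * y ^ 2)
          (β * 1 + K * ((2 : ℕ) * x ^ (2 - 1))) x :=
        (((hasDerivAt_id x).const_mul β).const_add α).add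
          ((hasDerivAt_pow 2 x).const_mul K)
      have h2 : β + 2 * K * x = β * 1 + K * ((2 : ℕ) * x ^ (2 - 1)) := by
        push_cast; ring
      rw [hP, h2]; exact h
    have hφderiv : ∀ x ∈ Icc a b, HasDerivWithinAt φ (φ' x) (Icc a b) x :=
      fun x hx => (hdiff x hx).sub (hPderiv x).hasDerivWithinAt
    have contφ : ContinuousOn φ (Icc a b) :=
      fun x hx => (hφderiv x hx).continuousWithinAt
    have derivAt : ∀ x ∈ Ioo a b, HasDerivAt φ (φ' x) x := fun x hx =>
      (hφderiv x (Ioo_subset_Icc_self hx)).hasDerivAt (Icc_mem_nhds hx.1 hx.2)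
    -- Rolle point
    obtain ⟨ξ, hξ, hξ0⟩ := exists_hasDerivAt_eq_slope φ φ' hac
      (contφ.mono (Icc_subset_Icc le_rfl hcb))
      (fun x hx => derivAt x ⟨hx.1, lt_of_lt_of_le hx.2 hcb⟩)
    rw [hφa, hφc] at hξ0
    simp only [sub_zero, zero_div, zero_sub] at hξ0
    have hξab : ξ ∈ Icc a b := ⟨hξ.1.le, hξ.2.le.trans hcb⟩
    have hcab : c ∈ Icc a b := ⟨hac.le, hcb⟩
    -- strict convexity of φ'
    have hconv' : ∀ x ∈ Icc a b, ∀ y ∈ Icc a b, x ≠ y → ∀ t s : ℝ,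
        0 < t → 0 < s → t + s = 1 →
        φ' (t * x + s * y) < t * φ' x + s * φ' y := by
      intro x hx y hy hxy t s ht hs hts
      have h := hconv.2 hx hy hxy ht hs hts
      simp only [smul_eq_mul] at h
      have hL : β + 2 * K * (t * x + s * y)
          = t * (β + 2 * K * x) + s * (β + 2 * K * y) := by
        linear_combination (-β) * hts
      simp only [hφ']
      linarith [h, hL]
    -- sign claims
    have claim1 : ∀ x ∈ Icc a b, x < ξ → 0 < φ' x := by
      intro x hx hxξ
      have hxc : x < c := hxξ.trans hξ.2
      have hcx : (0:ℝ) < c - x := by linarith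
      set t : ℝ := (c - ξ) / (c - x) with htd
      set s : ℝ := (ξ - x) / (c - x) with hsd
      have ht : 0 < t := div_pos (by linarith [hξ.2]) hcx
      have hs : 0 < s := div_pos (by linarith) hcx
      have hts : t + s = 1 := by rw [htd, hsd]; field_simp; ring
      have hcomb : t * x + s * c = ξ := by rw [htd, hsd]; field_simp; ring
      have h := hconv' x hx c hcab (by intro h; rw [h] at hxc; exact lt_irrefl c hxc) t s ht hs hts
      rw [hcomb, hξ0, hφ'c] at h
      nlinarith [h, ht]
    have claim2 : ∀ x ∈ Icc a b, ξ < x → x < c → φ' x < 0 := by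
      intro x hx hξx hxc
      have hξc : (0:ℝ) < c - ξ := by linarith
      set t : ℝ := (c - x) / (c - ξ) with htd
      set s : ℝ := (x - ξ) / (c - ξ) with hsd
      have ht : 0 < t := div_pos (by linarith) hξc
      have hs : 0 < s := div_pos (by linarith) hξc
      have hts : t + s = 1 := by rw [htd, hsd]; field_simp; ring
      have hcomb : t * ξ + s * c = x := by rw [htd, hsd]; field_simp; ring
      have h := hconv' ξ hξab c hcab (by intro h; rw [h] at hξ; exact lt_irrefl c hξ.2) t s ht hs hts
      rw [hcomb, hξ0, hφ'c] at h
      nlinarith [h]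
    have claim3 : ∀ x ∈ Icc a b, c < x → 0 < φ' x := by
      intro x hx hcx
      have hξx : (0:ℝ) < x - ξ := by linarith [hξ.2]
      set t : ℝ := (x - c) / (x - ξ) with htd
      set s : ℝ := (c - ξ) / (x - ξ) with hsd
      have ht : 0 < t := div_pos (by linarith) hξx
      have hs : 0 < s := div_pos (by linarith [hξ.2]) hξx
      have hts : t + s = 1 := by rw [htd, hsd]; field_simp; ring
      have hcomb : t * ξ + s * x = c := by rw [htd, hsd]; field_simp; ring
      have h := hconv' ξ hξab x hx (by intro h; rw [h] at hξx; nlinarith [hcx, hξ.2]) t s ht hs hts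
      rw [hcomb, hξ0] at h
      nlinarith [h, hs]
    -- conclude φ ≥ 0
    have key : ∀ x ∈ Icc a b, 0 ≤ φ x := by
      intro x hx
      rcases eq_or_lt_of_le hx.1 with hax | hax
      · rw [← hax, hφa]
      rcases lt_trichotomy x c with hxc | hxc | hxc
      · rcases le_or_gt x ξ with hxξ | hxξ
        · obtain ⟨η, hη, hηs⟩ := exists_hasDerivAt_eq_slope φ φ' hax
            (contφ.mono (Icc_subset_Icc le_rfl hx.2))
            (fun y hy => derivAt y ⟨hy.1, lt_of_lt_of_le hy.2 hx.2⟩)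
          have hηpos : 0 < φ' η :=
            claim1 η ⟨hη.1.le, hη.2.le.trans hx.2⟩ (lt_of_lt_of_le hη.2 hxξ)
          rw [hφa, sub_zero] at hηs
          have hmul : φ x = φ' η * (x - a) := by
            rw [hηs, div_mul_cancel₀ _ (sub_ne_zero.2 hax.ne')]
          linarith [hmul, mul_pos hηpos (show (0:ℝ) < x - a by linarith)]
        · obtain ⟨η, hη, hηs⟩ := exists_hasDerivAt_eq_slope φ φ' hxc
            (contφ.mono (Icc_subset_Icc hx.1 hcb))
            (fun y hy => derivAt y ⟨lt_of_le_of_lt hx.1 hy.1, lt_of_lt_of_le hy.2 hcb⟩)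
          have hηneg : φ' η < 0 :=
            claim2 η ⟨hx.1.trans hη.1.le, hη.2.le.trans hcb⟩ (hxξ.trans hη.1) hη.2
          rw [hφc, zero_sub] at hηs
          have hmul : -φ x = φ' η * (c - x) := by
            rw [hηs, div_mul_cancel₀ _ (sub_ne_zero.2 hxc.ne')]
          linarith [hmul, mul_neg_of_neg_of_pos hηneg (show (0:ℝ) < c - x by linarith)]
      · rw [hxc, hφc]
      · obtain ⟨η, hη, hηs⟩ := exists_hasDerivAt_eq_slope φ φ' hxc
          (contφ.mono (Icc_subset_Icc hac.le hx.2))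
          (fun y hy => derivAt y ⟨hac.trans hy.1, lt_of_lt_of_le hy.2 hx.2⟩)
        have hηpos : 0 < φ' η :=
          claim3 η ⟨hac.le.trans hη.1.le, hη.2.le.trans hx.2⟩ hη.1
        rw [hφc, sub_zero] at hηs
        have hmul : φ x = φ' η * (x - c) := by
          rw [hηs, div_mul_cancel₀ _ (sub_ne_zero.2 hxc.ne')]
        linarith [hmul, mul_pos hηpos (show (0:ℝ) < x - c by linarith)]
    intro x hx
    have := key x hx
    simp only [hφ, hP] at this
    linarith [this]

lemma tangent_upper (a b c : ℝ) (hab : a < b) (hac : a ≤ c) (hcb : c < b)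
    (g g' : ℝ → ℝ)
    (hdiff : ∀ x ∈ Icc a b, HasDerivWithinAt g (g' x) (Icc a b) x)
    (hconv : StrictConvexOn ℝ (Icc a b) g') :
    ∃ α β γ : ℝ, (α + β * c + γ * c ^ 2 = g c) ∧ (α + β * b + γ * b ^ 2 = g b) ∧
      ∀ x ∈ Icc a b, g x ≤ α + β * x + γ * x ^ 2 := by
  have hmem : ∀ x ∈ Icc (-b) (-a), -x ∈ Icc a b := fun x hx =>
    ⟨by linarith [hx.2], by linarith [hx.1]⟩
  have hdiffG : ∀ x ∈ Icc (-b) (-a),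
      HasDerivWithinAt (fun y => -g (-y)) ((fun y => g' (-y)) x) (Icc (-b) (-a)) x := by
    intro x hx
    have h1 := hdiff (-x) (hmem x hx)
    have h2 : HasDerivWithinAt (fun y => g (-y)) (g' (-x) * (-1)) (Icc (-b) (-a)) x :=
      HasDerivWithinAt.comp x h1 ((hasDerivAt_neg x).hasDerivWithinAt)
        (fun y hy => hmem y hy)
    have h3 := h2.neg
    have h4 : HasDerivWithinAt (fun y => -g (-y)) (-(g' (-x) * (-1))) (Icc (-b) (-a)) x := h3
    rw [show -(g' (-x) * (-1)) = g' (-x) by ring] at h4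
    exact h4
  have hconvG : StrictConvexOn ℝ (Icc (-b) (-a)) (fun y => g' (-y)) := by
    refine ⟨convex_Icc _ _, ?_⟩
    intro x hx y hy hxy t s ht hs hts
    have h := hconv.2 (hmem x hx) (hmem y hy) (fun h => hxy (neg_injective h)) ht hs hts
    simp only [smul_eq_mul] at h ⊢
    have he : -(t * x + s * y) = t * -x + s * -y := by ring
    rw [he]
    exact h
  obtain ⟨α, β, γ, h1, h2, h3⟩ := tangent_lower (-b) (-a) (-c) (by linarith)
    (by linarith) (by linarith) (fun y => -g (-y)) (fun y => g' (-y)) hdiffG hconvG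
  have h1' : α + β * (-b) + γ * b ^ 2 = -g b := by simpa [neg_sq] using h1
  have h2' : α + β * (-c) + γ * c ^ 2 = -g c := by simpa [neg_sq] using h2
  refine ⟨-α, β, -γ, by linarith, by linarith, ?_⟩
  intro y hy
  have := h3 (-y) ⟨by linarith [hy.2], by linarith [hy.1]⟩
  simp only [neg_neg, neg_sq] at this
  linarith

lemma integral_quadratic {μ : Measure ℝ} (hprob : IsProbabilityMeasure μ)
    (α β γ lam σ2 : ℝ)
    (h1 : Integrable (fun x => x) μ) (hm : (∫ x, x ∂μ) = lam)
    (h2 : Integrable (fun x => x ^ 2) μ) (hv : (∫ x, x ^ 2 ∂μ) - lam ^ 2 = σ2) :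
    (∫ x, (α + β * x + γ * x ^ 2) ∂μ) = α + β * lam + γ * (σ2 + lam ^ 2) := by
  haveI := hprob
  have hI1 : Integrable (fun x => α + β * x) μ := (integrable_const α).add (h1.const_mul β)
  have e1 : (∫ x, (α + β * x + γ * x ^ 2) ∂μ)
      = (∫ x, (α + β * x) ∂μ) + ∫ x, γ * x ^ 2 ∂μ :=
    integral_add hI1 (h2.const_mul γ)
  have e2 : (∫ x, (α + β * x) ∂μ) = (∫ x, (α : ℝ) ∂μ) + ∫ x, β * x ∂μ :=
    integral_add (integrable_const α) (h1.const_mul β)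
  rw [e1, e2, integral_const, integral_const_mul, integral_const_mul, hm]
  have hv' : (∫ x, x ^ 2 ∂μ) = σ2 + lam ^ 2 := by linarith
  rw [hv']
  simp only [probReal_univ, smul_eq_mul, one_mul]

set_option maxHeartbeats 1000000 in
/-- sharp bounds for `E[g(X)]` given mean and variance, when `g'`
is strictly convex on `[a,b]`. -/
theorem sharp_bounds_strict_convex_deriv (a b : ℝ) (hab : a < b)
    (g g' : ℝ → ℝ) (hgm : Measurable g)
    (hbdd : ∃ C : ℝ, ∀ x ∈ Icc a b, |g x| ≤ C)
    (hdiff : ∀ x ∈ Icc a b, HasDerivWithinAt g (g' x) (Icc a b) x)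
    (hconv : StrictConvexOn ℝ (Icc a b) g')
    (lam σ2 : ℝ) (hlam : lam ∈ Ioo a b) (hσ : 0 < σ2)
    (hσ' : σ2 ≤ (b - lam) * (lam - a)) :
    ∃ μm μp : Measure ℝ,
      (IsProbabilityMeasure μm ∧ msupport μm ⊆ Icc a b ∧
        Integrable (fun x => x) μm ∧ (∫ x, x ∂μm) = lam ∧
        Integrable (fun x => x ^ 2) μm ∧ (∫ x, x ^ 2 ∂μm) - lam ^ 2 = σ2) ∧
      (IsProbabilityMeasure μp ∧ msupport μp ⊆ Icc a b ∧
        Integrable (fun x => x) μp ∧ (∫ x, x ∂μp) = lam ∧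
        Integrable (fun x => x ^ 2) μp ∧ (∫ x, x ^ 2 ∂μp) - lam ^ 2 = σ2) ∧
      (∫ x, g x ∂μm) =
        (σ2 * g a + (lam - a) ^ 2 * g (lam + σ2 / (lam - a))) /
          (σ2 + (lam - a) ^ 2) ∧
      (∫ x, g x ∂μp) =
        (σ2 * g b + (lam - b) ^ 2 * g (lam + σ2 / (lam - b))) /
          (σ2 + (lam - b) ^ 2) ∧
      ∀ μ : Measure ℝ, IsProbabilityMeasure μ → msupport μ ⊆ Icc a b →
        Integrable (fun x => x) μ → (∫ x, x ∂μ) = lam →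
        Integrable (fun x => x ^ 2) μ → (∫ x, x ^ 2 ∂μ) - lam ^ 2 = σ2 →
        (∫ x, g x ∂μm) ≤ (∫ x, g x ∂μ) ∧ (∫ x, g x ∂μ) ≤ (∫ x, g x ∂μp) := by
  obtain ⟨C, hC⟩ := hbdd
  have hlane : lam - a ≠ 0 := sub_ne_zero.2 (ne_of_gt hlam.1)
  have hlbne : lam - b ≠ 0 := sub_ne_zero.2 (ne_of_lt hlam.2)
  obtain ⟨hal, hlb⟩ := hlam
  have hla : (0:ℝ) < lam - a := by linarith
  have hbl : (0:ℝ) < b - lam := by linarith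
  set cm : ℝ := lam + σ2 / (lam - a) with hcm
  set cp : ℝ := lam + σ2 / (lam - b) with hcp
  have hacm : a < cm := by
    have : 0 < σ2 / (lam - a) := div_pos hσ hla
    rw [hcm]; linarith
  have hcmb : cm ≤ b := by
    have : σ2 / (lam - a) ≤ b - lam := (div_le_iff₀ hla).2 (by nlinarith [hσ'])
    rw [hcm]; linarith
  have hacp : a ≤ cp := by
    have : a - lam ≤ σ2 / (lam - b) :=
      (le_div_iff_of_neg (by linarith : lam - b < 0)).2 (by nlinarith [hσ'])
    rw [hcp]; linarith
  have hcpb : cp < b := by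
    have : σ2 / (lam - b) < 0 := div_neg_of_pos_of_neg hσ (by linarith)
    rw [hcp]; linarith
  have hQm : ∀ α β γ : ℝ, Measurable fun x : ℝ => α + β * x + γ * x ^ 2 :=
    fun α β γ => (measurable_const.add (measurable_id.const_mul β)).add
      ((measurable_id.pow_const 2).const_mul γ)
  -- lower extremal measure
  set Dm : ℝ := σ2 + (lam - a) ^ 2 with hDm
  have hDmpos : 0 < Dm := by rw [hDm]; nlinarith [sq_nonneg (lam - a)]
  set pm : ℝ := σ2 / Dm with hpm
  set qm : ℝ := (lam - a) ^ 2 / Dm with hqm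
  obtain ⟨μm, hμmP, hμmS, hμmF⟩ := two_point a cm pm qm
    (le_of_lt (div_pos hσ hDmpos)) (div_nonneg (sq_nonneg _) hDmpos.le)
    (by rw [hpm, hqm, hDm]; field_simp) ⟨le_rfl, hab.le⟩ ⟨hacm.le, hcmb⟩
  obtain ⟨hIm1, hEm1⟩ := hμmF (fun x => x) measurable_id
  obtain ⟨hIm2, hEm2⟩ := hμmF (fun x => x ^ 2) (measurable_id.pow_const 2)
  obtain ⟨hImg, hEmg⟩ := hμmF g hgm
  have hmean_m : (∫ x, x ∂μm) = lam := by
    rw [hEm1, hpm, hqm, hDm, hcm]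
    field_simp [hlane, hlbne]
    try ring
  have hvar_m : (∫ x, x ^ 2 ∂μm) - lam ^ 2 = σ2 := by
    rw [hEm2, hpm, hqm, hDm, hcm]
    field_simp [hlane, hlbne]
    try ring
  have hgm_val : (∫ x, g x ∂μm) =
      (σ2 * g a + (lam - a) ^ 2 * g cm) / (σ2 + (lam - a) ^ 2) := by
    rw [hEmg, hpm, hqm, hDm]
    field_simp [hlane, hlbne]
    try ring
  -- upper extremal measure
  set Dp : ℝ := σ2 + (lam - b) ^ 2 with hDp
  have hDppos : 0 < Dp := by rw [hDp]; nlinarith [sq_nonneg (lam - b)]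
  set pp : ℝ := σ2 / Dp with hpp
  set qp : ℝ := (lam - b) ^ 2 / Dp with hqp
  obtain ⟨μp, hμpP, hμpS, hμpF⟩ := two_point b cp pp qp
    (le_of_lt (div_pos hσ hDppos)) (div_nonneg (sq_nonneg _) hDppos.le)
    (by rw [hpp, hqp, hDp]; field_simp) ⟨hab.le, le_rfl⟩ ⟨hacp, hcpb.le⟩
  obtain ⟨hIp1, hEp1⟩ := hμpF (fun x => x) measurable_id
  obtain ⟨hIp2, hEp2⟩ := hμpF (fun x => x ^ 2) (measurable_id.pow_const 2)
  obtain ⟨hIpg, hEpg⟩ := hμpF g hgm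
  have hmean_p : (∫ x, x ∂μp) = lam := by
    rw [hEp1, hpp, hqp, hDp, hcp]
    field_simp [hlane, hlbne]
    try ring
  have hvar_p : (∫ x, x ^ 2 ∂μp) - lam ^ 2 = σ2 := by
    rw [hEp2, hpp, hqp, hDp, hcp]
    field_simp [hlane, hlbne]
    try ring
  have hgp_val : (∫ x, g x ∂μp) =
      (σ2 * g b + (lam - b) ^ 2 * g cp) / (σ2 + (lam - b) ^ 2) := by
    rw [hEpg, hpp, hqp, hDp]
    field_simp [hlane, hlbne]
    try ring
  refine ⟨μm, μp, ⟨hμmP, hμmS, hIm1, hmean_m, hIm2, hvar_m⟩,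
    ⟨hμpP, hμpS, hIp1, hmean_p, hIp2, hvar_p⟩, hgm_val, hgp_val, ?_⟩
  intro μ hμP hμS hμI1 hμE1 hμI2 hμE2
  haveI := hμP
  have hnull : μ (Icc a b)ᶜ = 0 := msupport_null hμS
  have hae : ∀ᵐ x ∂μ, x ∈ Icc a b := by
    rw [ae_iff]
    have he : {x : ℝ | ¬ x ∈ Icc a b} = (Icc a b)ᶜ := rfl
    rw [he]; exact hnull
  have hgint : Integrable g μ := by
    refine Integrable.mono' (integrable_const C) hgm.aestronglyMeasurable ?_
    filter_upwards [hae] with x hx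
    simpa [Real.norm_eq_abs] using hC x hx
  constructor
  · obtain ⟨α, β, γ, hPa, hPc, hPle⟩ := tangent_lower a b cm hab hacm hcmb g g' hdiff hconv
    have hQint : Integrable (fun x => α + β * x + γ * x ^ 2) μ :=
      ((integrable_const α).add (hμI1.const_mul β)).add (hμI2.const_mul γ)
    have hle : (∫ x, (α + β * x + γ * x ^ 2) ∂μ) ≤ ∫ x, g x ∂μ := by
      refine integral_mono_ae hQint hgint ?_
      filter_upwards [hae] with x hx using hPle x hx
    have hQμ := integral_quadratic hμP α β γ lam σ2 hμI1 hμE1 hμI2 hμE2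
    have hQμm := integral_quadratic hμmP α β γ lam σ2 hIm1 hmean_m hIm2 hvar_m
    obtain ⟨hIq, hEq⟩ := hμmF (fun x => α + β * x + γ * x ^ 2) (hQm α β γ)
    have hchain : (∫ x, g x ∂μm) = ∫ x, (α + β * x + γ * x ^ 2) ∂μ := by
      calc (∫ x, g x ∂μm) = pm * g a + qm * g cm := hEmg
        _ = pm * (α + β * a + γ * a ^ 2) + qm * (α + β * cm + γ * cm ^ 2) := by
            rw [hPa, hPc]
        _ = ∫ x, (α + β * x + γ * x ^ 2) ∂μm := hEq.symm
        _ = α + β * lam + γ * (σ2 + lam ^ 2) := hQμm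
        _ = ∫ x, (α + β * x + γ * x ^ 2) ∂μ := hQμ.symm
    linarith [hle, hchain]
  · obtain ⟨α, β, γ, hPc, hPb, hPle⟩ := tangent_upper a b cp hab hacp hcpb g g' hdiff hconv
    have hQint : Integrable (fun x => α + β * x + γ * x ^ 2) μ :=
      ((integrable_const α).add (hμI1.const_mul β)).add (hμI2.const_mul γ)
    have hle : (∫ x, g x ∂μ) ≤ ∫ x, (α + β * x + γ * x ^ 2) ∂μ := by
      refine integral_mono_ae hgint hQint ?_
      filter_upwards [hae] with x hx using hPle x hx
    have hQμ := integral_quadratic hμP α β γ lam σ2 hμI1 hμE1 hμI2 hμE2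
    have hQμp := integral_quadratic hμpP α β γ lam σ2 hIp1 hmean_p hIp2 hvar_p
    obtain ⟨hIq, hEq⟩ := hμpF (fun x => α + β * x + γ * x ^ 2) (hQm α β γ)
    have hchain : (∫ x, g x ∂μp) = ∫ x, (α + β * x + γ * x ^ 2) ∂μ := by
      calc (∫ x, g x ∂μp) = pp * g b + qp * g cp := hEpg
        _ = pp * (α + β * b + γ * b ^ 2) + qp * (α + β * cp + γ * cp ^ 2) := by
            rw [hPb, hPc]
        _ = ∫ x, (α + β * x + γ * x ^ 2) ∂μp := hEq.symm
        _ = α + β * lam + γ * (σ2 + lam ^ 2) := hQμp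
        _ = ∫ x, (α + β * x + γ * x ^ 2) ∂μ := hQμ.symm
    linarith [hle, hchain]
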